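/- arXiv:1807.11505 — 2 statements merged into one kernel-verified Lean document; each statement's English description precedes it below -/
import Mathlib

section
/- An ascent sequence a avoids the pattern 101 if and only if it avoids the pattern 0101. -/
def ascents (l : List ℕ) : ℕ :=
  ((l.zip l.tail).filter (fun p => p.1 < p.2)).length

def IsAscSeq (l : List ℕ) : Prop :=
  l.getD 0 0 = 0 ∧
  ∀ k, k < l.length → 0 < k → l.getD k 0 ≤ ascents (l.take k) + 1

def IsRGF (l : List ℕ) : Prop :=
  l.getD 0 0 = 0 ∧
  ∀ k, k < l.length → ∀ j, l.getD k 0 = j + 1 → ∃ i, i < k ∧ l.getD i 0 = j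

def SelfModified (l : List ℕ) : Prop :=
  IsAscSeq l ∧
  ∀ k, k < l.length → 0 < k →
    l.getD k 0 ≤ l.getD (k - 1) 0 ∨ l.getD k 0 = ascents (l.take k) + 1

def Contains101 (l : List ℕ) : Prop :=
  ∃ i j k, i < j ∧ j < k ∧ k < l.length ∧
    l.getD i 0 = l.getD k 0 ∧ l.getD j 0 < l.getD k 0

def Contains0101 (l : List ℕ) : Prop :=
  ∃ i j k m, i < j ∧ j < k ∧ k < m ∧ m < l.length ∧
    l.getD i 0 = l.getD k 0 ∧ l.getD j 0 = l.getD m 0 ∧ l.getD i 0 < l.getD j 0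

def Contains1010 (l : List ℕ) : Prop :=
  ∃ i j k m, i < j ∧ j < k ∧ k < m ∧ m < l.length ∧
    l.getD i 0 = l.getD k 0 ∧ l.getD j 0 = l.getD m 0 ∧ l.getD j 0 < l.getD i 0

/-- The view of position `i` in the sequence `a`: the number of indices `j > i` such
that `a j` strictly exceeds all entries `a k` for `i ≤ k < j`.  This agrees with the
recursive definition `v i = v j + 1` for `j` the least index `> i` with `a j > a i`. -/
def view {α : Type*} [LinearOrder α] [Inhabited α] (a : List α) (i : ℕ) : ℕ :=
  ((List.range a.length).filter (fun j =>
    decide (i < j ∧ ∀ k, k < j → i ≤ k → a.getD k default < a.getD j default))).length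

/-- The panorama of `a`: the views of the positions of `a`, listed grouped by entry
value from largest value to smallest, positions within a group in increasing order. -/
def pan {α : Type*} [LinearOrder α] [Inhabited α] (a : List α) : List ℕ :=
  ((List.range a.length).mergeSort (fun i j =>
    decide (a.getD j default < a.getD i default ∨
      (a.getD i default = a.getD j default ∧ i ≤ j)))).map (view a)

/-- A square matrix of natural numbers, given by a dimension and an entry function
(indices are 0-based; entries with an index `≥ d` are irrelevant/zero). -/
structure FMat where
  d : ℕ
  entry : ℕ → ℕ → ℕ

/-- 0-based index of the first row whose rightmost entry is nonzero. -/
noncomputable def mindex (M : FMat) : ℕ :=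
  sInf {i | M.entry i (M.d - 1) ≠ 0}

/-- One step of the recursive bijection from ascent sequences to Fishburn matrices,
with cases AM1, AM2, AM3 (0-based indices). -/
noncomputable def fStep (M : FMat) (a : ℕ) : FMat :=
  if a ≤ mindex M then
    -- AM1: increase entry (a, d-1)
    ⟨M.d, fun i j => M.entry i j + if i = a ∧ j = M.d - 1 then 1 else 0⟩
  else if a = M.d then
    -- AM2: append a new row and column, with 1 in the new diagonal entry
    ⟨M.d + 1, fun i j =>
      if i = M.d ∨ j = M.d then (if i = M.d ∧ j = M.d then 1 else 0)
      else M.entry i j⟩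
  else
    -- AM3: insert a new row and column at index a
    ⟨M.d + 1, fun i j =>
      if i = a then (if j = M.d then 1 else 0)
      else if j = a then (if i < a then M.entry i (M.d - 1) else 0)
      else if j = M.d ∧ i < a then 0
      else M.entry (if i < a then i else i - 1) (if j < a then j else j - 1)⟩

/-- The map from ascent sequences to Fishburn matrices. -/
noncomputable def fAM (l : List ℕ) : FMat :=
  l.tail.foldl fStep ⟨1, fun i j => if i = 0 ∧ j = 0 then 1 else 0⟩

/-- Fishburn matrix: upper triangular (and supported on `[0,d) × [0,d)`),
with no zero row and no zero column. -/
def IsFishburn (M : FMat) : Prop :=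
  (∀ i j, (M.d ≤ i ∨ M.d ≤ j ∨ j < i) → M.entry i j = 0) ∧
  (∀ i, i < M.d → ∃ j, j < M.d ∧ M.entry i j ≠ 0) ∧
  (∀ j, j < M.d → ∃ i, i < M.d ∧ M.entry i j ≠ 0)

def entrySum (M : FMat) : ℕ :=
  ∑ i ∈ Finset.range M.d, ∑ j ∈ Finset.range M.d, M.entry i j

/-- Reflection of a matrix through its antidiagonal. -/
def reflect (M : FMat) : FMat :=
  ⟨M.d, fun i j => if i < M.d ∧ j < M.d then M.entry (M.d - 1 - j) (M.d - 1 - i) else 0⟩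

/-- The canonical sequence `(0^{m₀₀}, 1^{m₁₁}, 0^{m₀₁}, 2^{m₂₂}, 1^{m₁₂}, 0^{m₀₂}, …)`
(0-based indices) associated to a matrix; this is `f_MA(M)` for `M ∈ RMatrices`. -/
def canonSeq (M : FMat) : List ℕ :=
  (List.range M.d).flatMap (fun j =>
    (List.range (j + 1)).reverse.flatMap (fun i => List.replicate (M.entry i j) i))

/-- The dual canonical sequence
`(0^{m_{d-1,d-1}}, 1^{m_{d-2,d-2}}, 0^{m_{d-2,d-1}}, …, (d-1)^{m_{0,0}}, …, 0^{m_{0,d-1}})`,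
i.e. `f_MA` applied to the antidiagonal reflection of `M`. -/
def dualCanonSeq (M : FMat) : List ℕ :=
  (List.range M.d).flatMap (fun j =>
    (List.range (j + 1)).reverse.flatMap (fun i =>
      List.replicate (M.entry (M.d - 1 - j) (M.d - 1 - i)) i))

/-- A matrix is SE-free if it has no pair of nonzero entries `m i j`, `m i' j'`
with `i < i'`, `j < j'` and `i' ≤ j`. -/
def SEFree (M : FMat) : Prop :=
  ¬ ∃ i j i' j', i < i' ∧ j < j' ∧ i' ≤ j ∧ j' < M.d ∧
    M.entry i j ≠ 0 ∧ M.entry i' j' ≠ 0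

/-- Generalized ballot sequence (Yamanouchi word): in every prefix, each value `j+1`
occurs at most as often as `j`. -/
def IsBallot (l : List ℕ) : Prop :=
  ∀ k j, (l.take k).count (j + 1) ≤ (l.take k).count j

lemma ascents_cc (a b : ℕ) (t : List ℕ) :
    ascents (a :: b :: t) = (if a < b then 1 else 0) + ascents (b :: t) := by
  simp [ascents, List.filter_cons]
  split <;> simp [Nat.add_comm]

lemma ascents_concat (t : List ℕ) (a x : ℕ) : ascents (a :: (t ++ [x])) =
    ascents (a :: t) + if (a :: t).getD t.length 0 < x then 1 else 0 := by
  induction t generalizing a with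
  | nil => simp [ascents, List.filter_cons]; split <;> rfl
  | cons b s ih =>
      rw [List.cons_append, ascents_cc, ih b, ascents_cc a b s]
      have : (a :: b :: s).getD (b :: s).length 0 = (b :: s).getD s.length 0 := by
        simp [List.getD_cons_succ]
      rw [this]; ring

lemma ascents_take_succ (l : List ℕ) (n : ℕ) (hn : n < l.length) (h1 : 1 ≤ n) :
    ascents (l.take (n+1)) = ascents (l.take n) +
      if l.getD (n-1) 0 < l.getD n 0 then 1 else 0 := by
  have htake : l.take (n+1) = l.take n ++ [l.getD n 0] := by
    rw [List.getD_eq_getElem l 0 hn, List.take_succ]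
    simp [List.getElem?_eq_getElem hn]
  obtain ⟨a, t, hat⟩ : ∃ a t, l.take n = a :: t := by
    cases hl : l.take n with
    | nil => exfalso; have : (l.take n).length = min n l.length := List.length_take; simp [hl] at this; omega
    | cons a t => exact ⟨a, t, rfl⟩
  have hlen : t.length = n - 1 := by
    have : (l.take n).length = min n l.length := List.length_take; rw [hat] at this; simp at this; omega
  have hgd : (a :: t).getD t.length 0 = l.getD (n-1) 0 := by
    rw [← hat, hlen]
    have h2 : n - 1 < l.length := by omega
    have h3 : n - 1 < (l.take n).length := by rw [hat]; simp [List.length_cons]; omega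
    rw [List.getD_eq_getElem _ 0 h3, List.getD_eq_getElem l 0 h2]
    exact List.getElem_take
  rw [htake, hat, List.cons_append, ascents_concat, ← hat, hat, hgd]

lemma key_lemma (l : List ℕ) (h : IsAscSeq l) :
    ∀ n, 0 < n → n ≤ l.length →
    (∀ p q r, p < q → q < r → r < n → l.getD p 0 = l.getD r 0 →
      ¬ (l.getD q 0 < l.getD r 0)) →
    (∀ p, p < n → l.getD p 0 ≤ ascents (l.take n)) ∧
    (∀ v, v ≤ ascents (l.take n) → ∃ p, p < n ∧ l.getD p 0 = v) := by
  intro n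
  induction n with
  | zero => omega
  | succ n ih =>
      intro _ hlen hno
      rcases Nat.eq_zero_or_pos n with hn0 | hn1
      · subst hn0
        have h1 : l.take 1 = [l.getD 0 0] := by
          rw [List.getD_eq_getElem l 0 (by omega), List.take_succ]
          simp [List.getElem?_eq_getElem (show 0 < l.length by omega)]
        have ha : ascents (l.take 1) = 0 := by rw [h1]; rfl
        constructor
        · intro p hp
          have : p = 0 := by omega
          subst this; rw [ha, h.1]
        · intro v hv
          rw [ha] at hv
          exact ⟨0, by omega, by rw [h.1]; omega⟩
      · have hIH := ih hn1 (by omega)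
          (fun p q r hpq hqr hr => hno p q r hpq hqr (by omega))
        set A := ascents (l.take n) with hA
        have hstep := ascents_take_succ l n (by omega) hn1
        have hbound : l.getD n 0 ≤ A + 1 := h.2 n (by omega) hn1
        have hlast : l.getD (n-1) 0 ≤ A := hIH.1 (n-1) (by omega)
        by_cases hlx : l.getD (n-1) 0 < l.getD n 0
        · have hx : l.getD n 0 = A + 1 := by
            rcases Nat.lt_or_ge A (l.getD n 0) with h' | h'
            · omega
            · exfalso
              obtain ⟨p, hp, hpe⟩ := hIH.2 (l.getD n 0) h'
              have hpne : p ≠ n - 1 := by intro he; rw [he] at hpe; omega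
              exact hno p (n-1) n (by omega) (by omega) (by omega) hpe hlx
          rw [hstep, if_pos hlx]
          constructor
          · intro p hp
            rcases Nat.lt_or_ge p n with h' | h'
            · exact le_trans (hIH.1 p h') (by omega)
            · have : p = n := by omega
              subst this; omega
          · intro v hv
            rcases Nat.lt_or_ge v (A+1) with h' | h'
            · obtain ⟨p, hp, hpe⟩ := hIH.2 v (by omega)
              exact ⟨p, by omega, hpe⟩
            · exact ⟨n, by omega, by omega⟩
        · rw [hstep, if_neg hlx]
          constructor
          · intro p hp
            rcases Nat.lt_or_ge p n with h' | h'
            · exact hIH.1 p h'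
            · have : p = n := by omega
              subst this; omega
          · intro v hv
            obtain ⟨p, hp, hpe⟩ := hIH.2 v hv
            exact ⟨p, by omega, hpe⟩

theorem avoids101_iff_avoids0101 (l : List ℕ) (h : IsAscSeq l) :
    ¬ Contains101 l ↔ ¬ Contains0101 l := by
  constructor
  · intro h101 h0101
    obtain ⟨i, j, k, m, hij, hjk, hkm, hm, h1, h2, h3⟩ := h0101
    exact h101 ⟨j, k, m, hjk, hkm, hm, h2, by omega⟩
  · intro h0101 h101
    apply h0101
    set P : ℕ → Prop := fun k => ∃ i j, i < j ∧ j < k ∧ k < l.length ∧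
      l.getD i 0 = l.getD k 0 ∧ l.getD j 0 < l.getD k 0 with hP
    have hdec : DecidablePred P := fun _ => Classical.dec _
    have hex : ∃ k, P k := by
      obtain ⟨i, j, k, hij, hjk, hk, h1, h2⟩ := h101
      exact ⟨k, i, j, hij, hjk, hk, h1, h2⟩
    obtain ⟨i, j, hij, hjK, hKlen, hiK, hjlt⟩ := Nat.find_spec hex
    set K := Nat.find hex with hKdef
    have hmin : ∀ r, r < K → ¬ P r := fun r hr => Nat.find_min hex hr
    have hipos : 0 < i := by
      rcases Nat.eq_zero_or_pos i with h0 | h0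
      · exfalso
        have : l.getD i 0 = 0 := by rw [h0]; exact h.1
        omega
      · exact h0
    have hno : ∀ p q r, p < q → q < r → r < i → l.getD p 0 = l.getD r 0 →
        ¬ (l.getD q 0 < l.getD r 0) := by
      intro p q r hpq hqr hri h1 h2
      exact hmin r (by omega) ⟨p, q, hpq, hqr, by omega, h1, h2⟩
    obtain ⟨_, hall⟩ := key_lemma l h i hipos (by omega) hno
    have hbi : l.getD i 0 ≤ ascents (l.take i) + 1 := h.2 i (by omega) hipos
    obtain ⟨p, hpi, hpe⟩ := hall (l.getD j 0) (by omega)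
    exact ⟨p, i, j, K, hpi, hij, hjK, hKlen, by omega, by omega, by omega⟩
end

section
/- For any finite nonempty sequence a of real numbers, the panorama sequence pan(a) is an ascent sequence. -/
section PanAscAux

open List

private lemma countP_range_card (m : ℕ) (p : ℕ → Bool) :
    List.countP p (List.range m) = ((Finset.range m).filter (fun t => p t = true)).card := by
  induction m with
  | zero => simp
  | succ m ih =>
      rw [List.range_succ, List.countP_append, Finset.range_add_one, Finset.filter_insert]
      by_cases h : p m = true
      · rw [if_pos h, Finset.card_insert_of_notMem (by simp)]
        simp [h, ih, List.countP_cons]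
      · rw [if_neg h]
        simp [h, ih, List.countP_cons]

private lemma ascents_eq_card (l : List ℕ) :
    ascents l = ((Finset.range (l.length - 1)).filter
      (fun t => l.getD t 0 < l.getD (t + 1) 0)).card := by
  have hzip : l.zip l.tail = (List.range (l.length - 1)).map
      (fun t => (l.getD t 0, l.getD (t + 1) 0)) := by
    apply List.ext_getElem
    · simp [List.length_zip, List.length_tail]
    · intro i h1 h2
      have hi : i < l.length - 1 := by simpa using h2
      have h3 : i < l.length := by omega
      have h4 : i + 1 < l.length := by omega
      rw [List.getElem_zip, List.getElem_map, List.getElem_range]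
      rw [List.getD_eq_getElem l 0 h3, List.getD_eq_getElem l 0 h4]
      rw [List.getElem_tail]
  unfold ascents
  rw [hzip, ← List.countP_eq_length_filter, List.countP_map, countP_range_card]
  congr 1
  apply Finset.filter_congr
  intro t _
  simp

private lemma exists_ascent (l : List ℕ) (d : ℕ) : ∀ q, l.getD q 0 < l.getD (q + d) 0 →
    ∃ t, q ≤ t ∧ t < q + d ∧ l.getD t 0 < l.getD (t + 1) 0 := by
  induction d with
  | zero => intro q hq; simp at hq
  | succ d ih =>
      intro q hq
      by_cases h : l.getD (q + d) 0 < l.getD (q + d + 1) 0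
      · exact ⟨q + d, by omega, by omega, h⟩
      · push_neg at h
        have hq' : l.getD q 0 < l.getD (q + d) 0 := by
          have : q + (d + 1) = q + d + 1 := by omega
          rw [this] at hq; omega
        obtain ⟨t, h1, h2, h3⟩ := ih q hq'
        exact ⟨t, h1, by omega, h3⟩

private lemma ascents_lower (l : List ℕ) (v : ℕ) (m : ℕ → ℕ)
    (hmono : ∀ s, s + 1 < v → m s < m (s + 1))
    (hlen : ∀ s, s < v → m s < l.length)
    (hval : ∀ s, s + 1 < v → l.getD (m s) 0 < l.getD (m (s + 1)) 0) :
    v ≤ ascents l + 1 := by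
  rcases Nat.eq_zero_or_pos v with hv | hv
  · omega
  have m_mono : ∀ s' s, s < s' → s' < v → m s < m s' := by
    intro s'
    induction s' with
    | zero => omega
    | succ s' ih =>
        intro s hs hsv
        rcases Nat.lt_succ_iff_lt_or_eq.1 hs with h | h
        · exact (ih s h (by omega)).trans (hmono s' (by omega))
        · subst h; exact hmono s hsv
  have H : ∀ s, ∃ t, s + 1 < v → m s ≤ t ∧ t < m (s + 1) ∧ l.getD t 0 < l.getD (t + 1) 0 := by
    intro s
    by_cases hs : s + 1 < v
    · obtain ⟨t, h1, h2, h3⟩ := exists_ascent l (m (s + 1) - m s) (m s) (by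
        have h := hval s hs
        have := hmono s hs
        rwa [Nat.add_sub_cancel' (le_of_lt this)])
      exact ⟨t, fun _ => ⟨h1, by have := hmono s hs; omega, h3⟩⟩
    · exact ⟨0, fun h => absurd h hs⟩
  choose t ht using H
  rw [ascents_eq_card]
  have hcard : v - 1 ≤ ((Finset.range (l.length - 1)).filter
      (fun t => l.getD t 0 < l.getD (t + 1) 0)).card := by
    rw [← Finset.card_range (v - 1)]
    apply Finset.card_le_card_of_injOn t
    · intro s hs
      have hs : s < v - 1 := Finset.mem_range.1 hs
      obtain ⟨h1, h2, h3⟩ := ht s (by omega)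
      have h4 : m (s + 1) < l.length := hlen (s + 1) (by omega)
      exact Finset.mem_filter.2 ⟨Finset.mem_range.2 (by omega), h3⟩
    · intro s hs s' hs' heq
      simp only [Finset.mem_coe, Finset.mem_range] at hs hs'
      by_contra hne
      rcases lt_or_gt_of_ne hne with h | h
      · obtain ⟨ha1, ha2, _⟩ := ht s (by omega)
        obtain ⟨hb1, hb2, _⟩ := ht s' (by omega)
        have : m (s + 1) ≤ m s' := by
          rcases Nat.lt_or_ge (s + 1) s' with hlt | hge
          · exact le_of_lt (m_mono s' (s + 1) hlt (by omega))
          · have : s + 1 = s' := by omega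
            rw [this]
        omega
      · obtain ⟨ha1, ha2, _⟩ := ht s (by omega)
        obtain ⟨hb1, hb2, _⟩ := ht s' (by omega)
        have : m (s' + 1) ≤ m s := by
          rcases Nat.lt_or_ge (s' + 1) s with hlt | hge
          · exact le_of_lt (m_mono s (s' + 1) hlt (by omega))
          · have : s' + 1 = s := by omega
            rw [this]
        omega
  omega

private lemma getD_take' {l : List ℕ} {k t : ℕ} (h : t < k) (h2 : k ≤ l.length) :
    (l.take k).getD t 0 = l.getD t 0 := by
  rw [List.getD_eq_getElem (l.take k) 0 (by simp [List.length_take]; omega),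
      List.getD_eq_getElem l 0 (by omega), List.getElem_take]

open Classical in
private noncomputable def Svw (a : List ℝ) (i : ℕ) : Finset ℕ :=
  (Finset.range a.length).filter
    (fun j => i < j ∧ ∀ k, k < j → i ≤ k → a.getD k default < a.getD j default)

private lemma mem_Svw {a : List ℝ} {i j : ℕ} :
    j ∈ Svw a i ↔ j < a.length ∧ i < j ∧
      ∀ k, k < j → i ≤ k → a.getD k default < a.getD j default := by
  simp [Svw, Finset.mem_filter, Finset.mem_range, and_assoc]

private lemma view_eq_card (a : List ℝ) (i : ℕ) : view a i = (Svw a i).card := by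
  unfold view Svw
  rw [← List.countP_eq_length_filter, countP_range_card]
  congr 1
  apply Finset.filter_congr
  intro j _
  simp

private lemma Svw_lt {a : List ℝ} {i j : ℕ} (hj : j ∈ Svw a i) :
    a.getD i default < a.getD j default := by
  rw [mem_Svw] at hj
  exact hj.2.2 i hj.2.1 le_rfl

private lemma Svw_mem_trans {a : List ℝ} {i j j' : ℕ} (hj : j ∈ Svw a i)
    (hj' : j' ∈ Svw a i) (h : j < j') : j' ∈ Svw a j := by
  rw [mem_Svw] at *
  refine ⟨hj'.1, h, ?_⟩
  intro k hk hk'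
  exact hj'.2.2 k hk (le_trans (le_of_lt hj.2.1) hk')

private lemma Svw_subset {a : List ℝ} {j j' : ℕ} (hj' : j' ∈ Svw a j) :
    Svw a j' ⊆ Svw a j := by
  intro x hx
  rw [mem_Svw] at hj' hx ⊢
  refine ⟨hx.1, lt_trans hj'.2.1 hx.2.1, ?_⟩
  intro k hk hjk
  by_cases hc : j' ≤ k
  · exact hx.2.2 k hk hc
  · push_neg at hc
    have h1 : a.getD k default < a.getD j' default := hj'.2.2 k hc hjk
    have h2 : a.getD j' default < a.getD x default := hx.2.2 j' hx.2.1 le_rfl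
    linarith

private lemma view_lt_view {a : List ℝ} {i j j' : ℕ} (hj : j ∈ Svw a i)
    (hj' : j' ∈ Svw a i) (h : j < j') : view a j' < view a j := by
  rw [view_eq_card, view_eq_card]
  apply Finset.card_lt_card
  have hm := Svw_mem_trans hj hj' h
  rw [Finset.ssubset_iff_of_subset (Svw_subset hm)]
  exact ⟨j', hm, by simp [mem_Svw]⟩

end PanAscAux

theorem pan_isAscSeq (a : List ℝ) (h : a ≠ []) : IsAscSeq (pan a) := by
  classical
  have hn0 : 0 < a.length := List.length_pos_iff.2 h
  set n := a.length with hn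
  let r : ℕ → ℕ → Bool := fun i j =>
    decide (a.getD j default < a.getD i default ∨
      (a.getD i default = a.getD j default ∧ i ≤ j))
  let L := (List.range a.length).mergeSort r
  have hpan : pan a = L.map (view a) := rfl
  have hperm : L.Perm (List.range a.length) := List.mergeSort_perm _ _
  have hLlen : L.length = n := by rw [hperm.length_eq, List.length_range]
  have hsort : L.Pairwise (fun i j => r i j = true) := by
    apply List.pairwise_mergeSort
    · intro x y z hxy hyz
      simp only [r, decide_eq_true_eq] at *
      rcases hxy with h1 | ⟨h1, h1'⟩ <;> rcases hyz with h2 | ⟨h2, h2'⟩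
      · exact Or.inl (lt_trans h2 h1)
      · exact Or.inl (by rw [← h2]; exact h1)
      · exact Or.inl (by rw [h1]; exact h2)
      · exact Or.inr ⟨h1.trans h2, h1'.trans h2'⟩
    · intro x y
      simp only [r, Bool.or_eq_true, decide_eq_true_eq]
      rcases lt_trichotomy (a.getD x default) (a.getD y default) with hc | hc | hc
      · exact Or.inr (Or.inl hc)
      · rcases le_total x y with h' | h'
        · exact Or.inl (Or.inr ⟨hc, h'⟩)
        · exact Or.inr (Or.inr ⟨hc.symm, h'⟩)
      · exact Or.inl (Or.inl hc)
  have hmemL : ∀ x, x < n → x ∈ L := fun x hx => hperm.mem_iff.2 (List.mem_range.2 hx)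
  have key : ∀ (k : ℕ) (hk : k < L.length) (x : ℕ), x < n →
      a.getD (L[k]'hk) default < a.getD x default → L.idxOf x < k := by
    intro k hk x hxn hlt
    have hxL := hmemL x hxn
    have hix : L.idxOf x < L.length := List.idxOf_lt_length_iff.2 hxL
    by_contra hcon
    push_neg at hcon
    rcases eq_or_lt_of_le hcon with heq | hklt
    · have hx' : L[k]'hk = x := by
        subst heq
        exact List.getElem_idxOf hix
      rw [hx'] at hlt
      exact lt_irrefl _ hlt
    · have hp := List.pairwise_iff_getElem.1 hsort k (L.idxOf x) hk hix hklt
      rw [List.getElem_idxOf hix] at hp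
      simp only [r, decide_eq_true_eq] at hp
      rcases hp with h' | ⟨h', _⟩
      · linarith
      · linarith
  have hplen : (pan a).length = n := by rw [hpan, List.length_map, hLlen]
  have hpget : ∀ (t : ℕ) (ht : t < L.length), (pan a).getD t 0 = view a (L[t]'ht) := by
    intro t ht
    rw [hpan, List.getD_eq_getElem _ _ (by rw [List.length_map]; exact ht), List.getElem_map]
  constructor
  · have h0 : (0 : ℕ) < L.length := by omega
    rw [hpget 0 h0, view_eq_card, Finset.card_eq_zero, Finset.eq_empty_iff_forall_notMem]
    intro j hj
    have hjn : j < n := (mem_Svw.1 hj).1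
    have hlt := Svw_lt hj
    have := key 0 h0 j hjn hlt
    omega
  · intro k hk hk0
    rw [hplen] at hk
    have hkL : k < L.length := by omega
    rw [hpget k hkL, view_eq_card]
    set x := L[k]'hkL with hxdef
    set v := (Svw a x).card with hv
    set cl := (Svw a x).sort (· ≤ ·) with hc
    have hclen : cl.length = v := Finset.length_sort _
    have hcmem : ∀ (s : ℕ) (hs : s < cl.length), (cl[s]'hs) ∈ Svw a x := by
      intro s hs
      have hm : cl[s]'hs ∈ cl := List.getElem_mem _
      exact (Finset.mem_sort _).1 hm
    have hcmono : ∀ (s s' : ℕ) (hs' : s' < cl.length) (hss : s < s'),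
        (cl[s]'(by omega)) < (cl[s']'hs') := by
      intro s s' hs' hss
      have hsorted : cl.Pairwise (· < ·) := (Finset.sortedLT_sort _).pairwise
      exact List.pairwise_iff_getElem.1 hsorted s s' (by omega) hs' hss
    let mfun : ℕ → ℕ := fun t => L.idxOf (cl.getD (v - 1 - t) 0)
    have hmk : ∀ (s : ℕ), s < v → mfun s < k := by
      intro s hs
      have hi1 : v - 1 - s < cl.length := by omega
      have hy1m := hcmem _ hi1
      have hy1n : (cl[v - 1 - s]'hi1) < n := (mem_Svw.1 hy1m).1
      have hlt : L.idxOf (cl[v - 1 - s]'hi1) < k := key k hkL _ hy1n (Svw_lt hy1m)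
      simpa only [mfun, List.getD_eq_getElem cl 0 hi1] using hlt
    have main : ∀ s, s + 1 < v → mfun s < mfun (s + 1) ∧
        (pan a).getD (mfun s) 0 < (pan a).getD (mfun (s + 1)) 0 := by
      intro s hs
      have hi2 : v - 1 - (s + 1) < cl.length := by omega
      have hi1 : v - 1 - s < cl.length := by omega
      set y1 := cl[v - 1 - s]'hi1 with hy1
      set y2 := cl[v - 1 - (s + 1)]'hi2 with hy2
      have hm1 : mfun s = L.idxOf y1 := by
        simp only [mfun, List.getD_eq_getElem cl 0 hi1, hy1]
      have hm2 : mfun (s + 1) = L.idxOf y2 := by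
        simp only [mfun, List.getD_eq_getElem cl 0 hi2, hy2]
      have hy1m : y1 ∈ Svw a x := hcmem _ hi1
      have hy2m : y2 ∈ Svw a x := hcmem _ hi2
      have hlt12 : y2 < y1 := hcmono _ _ hi1 (by omega)
      have hy1in2 : y1 ∈ Svw a y2 := Svw_mem_trans hy2m hy1m hlt12
      have hy1n : y1 < n := (mem_Svw.1 hy1m).1
      have hy2n : y2 < n := (mem_Svw.1 hy2m).1
      have hAy : a.getD y2 default < a.getD y1 default := Svw_lt hy1in2
      have hiy2 : L.idxOf y2 < L.length := List.idxOf_lt_length_iff.2 (hmemL _ hy2n)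
      have hiy1 : L.idxOf y1 < L.length := List.idxOf_lt_length_iff.2 (hmemL _ hy1n)
      have hidx : L.idxOf y1 < L.idxOf y2 := by
        apply key (L.idxOf y2) hiy2 y1 hy1n
        rw [List.getElem_idxOf hiy2]
        exact hAy
      refine ⟨by rw [hm1, hm2]; exact hidx, ?_⟩
      rw [hm1, hm2, hpget _ hiy1, hpget _ hiy2, List.getElem_idxOf hiy1,
        List.getElem_idxOf hiy2]
      exact view_lt_view hy2m hy1m hlt12
    apply ascents_lower ((pan a).take k) v mfun
    · intro s hs
      exact (main s hs).1
    · intro s hs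
      have hlt : ((pan a).take k).length = k := by
        rw [List.length_take, hplen]; omega
      rw [hlt]
      exact hmk s hs
    · intro s hs
      rw [getD_take' (hmk s (by omega)) (by rw [hplen]; omega),
        getD_take' (hmk (s + 1) (by omega)) (by rw [hplen]; omega)]
      exact (main s hs).2
end
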